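/- Let α > 1 and let φ be an analytic self-map of the unit disk D. Then C_φ is an isometry on the harmonic α-Bloch space HB(α) if and only if φ is a rotation. -/

import Mathlib

open Complex Metric Set Filter Topology
noncomputable section

/-- The open unit disk in `ℂ`. -/
def unitDisk : Set ℂ := Metric.ball (0 : ℂ) 1

/-- The set of values `(1-|z|²)^α (|f_z(z)| + |f_z̄(z)|)` for `z` in the unit disk, where the
harmonic function is `f = h + conj g` with `h, g` analytic, so `f_z = h'` and `f_z̄ = conj g'`. -/
def hbSet (α : ℝ) (h g : ℂ → ℂ) : Set ℝ :=
  (fun z => (1 - ‖z‖ ^ 2) ^ α *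
    (‖deriv h z‖ + ‖deriv g z‖)) '' unitDisk

/-- The harmonic α-Bloch seminorm `‖f‖_{HB(α)}` of `f = h + conj g`. -/
def hbSemi (α : ℝ) (h g : ℂ → ℂ) : ℝ := sSup (hbSet α h g)

/-- The harmonic α-Bloch norm `|||f|||_{HB(α)} = |f(0)| + ‖f‖_{HB(α)}` of `f = h + conj g`. -/
def hbNorm (α : ℝ) (h g : ℂ → ℂ) : ℝ :=
  ‖h 0 + (starRingEnd ℂ) (g 0)‖ + hbSemi α h g

/-- An analytic self-map of the unit disk. -/
def IsSelfMap (φ : ℂ → ℂ) : Prop :=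
  DifferentiableOn ℂ φ unitDisk ∧ MapsTo φ unitDisk unitDisk

/-- `f = h + conj g` is a harmonic α-Bloch function: `h, g` analytic on the disk and the
Bloch quantity is bounded. -/
def IsHB (α : ℝ) (h g : ℂ → ℂ) : Prop :=
  DifferentiableOn ℂ h unitDisk ∧ DifferentiableOn ℂ g unitDisk ∧ BddAbove (hbSet α h g)

/-- The composition operator `C_φ` is an isometry on `HB(α)`: `|||f∘φ||| = |||f|||` for every
harmonic α-Bloch function `f = h + conj g` (note `f ∘ φ = h∘φ + conj (g∘φ)`). -/
def IsIsometryOn (α : ℝ) (φ : ℂ → ℂ) : Prop :=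
  ∀ h g : ℂ → ℂ, IsHB α h g → hbNorm α (h ∘ φ) (g ∘ φ) = hbNorm α h g

/-- `φ` is a rotation of the unit disk. -/
def IsRotation (φ : ℂ → ℂ) : Prop :=
  ∃ lam : ℂ, ‖lam‖ = 1 ∧ ∀ z ∈ unitDisk, φ z = lam * z

/-- `τ_φ(z) = (1-|z|²)|φ'(z)| / (1-|φ(z)|²)`. -/
def tauPhi (φ : ℂ → ℂ) (z : ℂ) : ℝ :=
  (1 - ‖z‖ ^ 2) * ‖deriv φ z‖ / (1 - ‖φ z‖ ^ 2)

def mob (a w : ℂ) : ℂ := (a - w) / (1 - (starRingEnd ℂ) a * w)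

lemma mob_denom_ne (a w : ℂ) (ha : ‖a‖ < 1) (hw : ‖w‖ < 1) :
    1 - (starRingEnd ℂ) a * w ≠ 0 := by
  intro h
  have h1 : (1 : ℂ) = (starRingEnd ℂ) a * w := by linear_combination h
  have := congrArg (‖·‖) h1
  simp only [norm_one, norm_mul, Complex.norm_conj] at this
  nlinarith [norm_nonneg a, norm_nonneg w]

lemma normSq_identity (a w : ℂ) :
    Complex.normSq (1 - (starRingEnd ℂ) a * w) - Complex.normSq (a - w)
      = (1 - Complex.normSq a) * (1 - Complex.normSq w) := by
  simp only [Complex.normSq_apply, Complex.sub_re, Complex.sub_im, Complex.mul_re,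
    Complex.mul_im, Complex.one_re, Complex.one_im, Complex.conj_re, Complex.conj_im]
  ring

lemma mob_mem (a : ℂ) (ha : a ∈ unitDisk) : MapsTo (mob a) unitDisk unitDisk := by
  intro w hw
  rw [unitDisk, mem_ball_zero_iff] at *
  have hd := mob_denom_ne a w ha hw
  rw [mob, norm_div, div_lt_one (norm_pos_iff.mpr hd)]
  · have h1 : Complex.normSq a < 1 := by
      rw [← Complex.sq_norm] at *; nlinarith [norm_nonneg a]
    have h2 : Complex.normSq w < 1 := by
      rw [← Complex.sq_norm] at *; nlinarith [norm_nonneg w]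
    have := normSq_identity a w
    have hlt : Complex.normSq (a - w) < Complex.normSq (1 - (starRingEnd ℂ) a * w) := by
      nlinarith
    have := Complex.sq_norm (a - w)
    have := Complex.sq_norm (1 - (starRingEnd ℂ) a * w)
    nlinarith [norm_nonneg (a - w), norm_nonneg (1 - (starRingEnd ℂ) a * w)]

lemma mob_self (a : ℂ) (ha : ‖a‖ < 1) : mob a a = 0 := by
  simp [mob]

lemma mob_zero (a : ℂ) : mob a 0 = a := by simp [mob]

lemma mob_hasDeriv (a w : ℂ) (hd : 1 - (starRingEnd ℂ) a * w ≠ 0) :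
    HasDerivAt (mob a) ((Complex.normSq a - 1) / (1 - (starRingEnd ℂ) a * w) ^ 2) w := by
  have h1 : HasDerivAt (fun z => a - z) (-1) w := by
    simpa using (hasDerivAt_id w).const_sub a
  have h2 : HasDerivAt (fun z => 1 - (starRingEnd ℂ) a * z) (-(starRingEnd ℂ) a) w := by
    simpa using ((hasDerivAt_id w).const_mul ((starRingEnd ℂ) a)).const_sub 1
  have := h1.div h2 hd
  refine this.congr_deriv ?_
  rw [Complex.normSq_eq_conj_mul_self]
  ring

lemma mob_diff (a : ℂ) (ha : ‖a‖ < 1) : DifferentiableOn ℂ (mob a) unitDisk := by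
  intro w hw
  rw [unitDisk, mem_ball_zero_iff] at hw
  exact (mob_hasDeriv a w (mob_denom_ne a w ha hw)).differentiableAt.differentiableWithinAt

/-- Schwarz–Pick. -/
lemma schwarz_pick {φ : ℂ → ℂ} (hdφ : DifferentiableOn ℂ φ unitDisk)
    (hm : MapsTo φ unitDisk unitDisk) {a : ℂ} (ha : a ∈ unitDisk) :
    (1 - ‖a‖ ^ 2) * ‖deriv φ a‖ ≤ 1 - ‖φ a‖ ^ 2 := by
  have ha' : ‖a‖ < 1 := by
    simpa [unitDisk, mem_ball_zero_iff] using ha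
  have hb : φ a ∈ unitDisk := hm ha
  have hb' : ‖φ a‖ < 1 := by
    simpa [unitDisk, mem_ball_zero_iff] using hb
  have hnb : Complex.normSq (φ a) < 1 := by
    rw [← Complex.sq_norm]; nlinarith [norm_nonneg (φ a)]
  have hdb : (1 : ℂ) - (starRingEnd ℂ) (φ a) * (φ a) ≠ 0 := by
    rw [← Complex.normSq_eq_conj_mul_self]
    intro h
    have : ((1 - Complex.normSq (φ a) : ℝ) : ℂ) = 0 := by push_cast; linear_combination h
    rw [Complex.ofReal_eq_zero] at this
    linarith
  -- derivatives
  have Da : HasDerivAt (mob a) ((Complex.normSq a : ℂ) - 1) 0 := by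
    have := mob_hasDeriv a 0 (by simp)
    simpa using this
  have Dφ : HasDerivAt φ (deriv φ a) (mob a 0) := by
    rw [mob_zero]
    exact (hdφ.differentiableAt (by rw [unitDisk] at ha ⊢; exact isOpen_ball.mem_nhds ha)).hasDerivAt
  have Db : HasDerivAt (mob (φ a)) (((Complex.normSq (φ a) : ℂ) - 1) /
      (1 - (starRingEnd ℂ) (φ a) * (φ a)) ^ 2) ((φ ∘ mob a) 0) := by
    have : (φ ∘ mob a) 0 = φ a := by simp [mob_zero]
    rw [this]
    exact mob_hasDeriv (φ a) (φ a) hdb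
  have Dg : HasDerivAt (mob (φ a) ∘ (φ ∘ mob a))
      ((((Complex.normSq (φ a) : ℂ) - 1) / (1 - (starRingEnd ℂ) (φ a) * (φ a)) ^ 2) *
        (deriv φ a * ((Complex.normSq a : ℂ) - 1))) 0 :=
    Db.comp 0 (Dφ.comp 0 Da)
  -- the composed map
  have gdiff : DifferentiableOn ℂ (mob (φ a) ∘ (φ ∘ mob a)) unitDisk :=
    (mob_diff (φ a) hb').comp (hdφ.comp (mob_diff a ha') (mob_mem a ha))
      ((hm.comp (mob_mem a ha)))
  have gmaps : MapsTo (mob (φ a) ∘ (φ ∘ mob a)) unitDisk unitDisk :=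
    (mob_mem (φ a) hb).comp (hm.comp (mob_mem a ha))
  have g0 : (mob (φ a) ∘ (φ ∘ mob a)) 0 = 0 := by
    simp [Function.comp, mob_zero, mob_self (φ a) hb']
  have hz : (0 : ℂ) ∈ unitDisk := by simp [unitDisk]
  have hschwarz : ‖deriv (mob (φ a) ∘ (φ ∘ mob a)) 0‖ ≤ 1 := by
    rw [unitDisk] at gdiff gmaps
    exact Complex.norm_deriv_le_one_of_mapsTo_ball gdiff
      (by rw [g0]; exact gmaps.mono_right ball_subset_closedBall) one_pos
  rw [Dg.deriv] at hschwarz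
  have hred : ‖(((Complex.normSq (φ a) : ℂ) - 1) /
      (1 - (starRingEnd ℂ) (φ a) * (φ a)) ^ 2) * (deriv φ a * ((Complex.normSq a : ℂ) - 1))‖
      = ((1 - Complex.normSq (φ a)) / (1 - Complex.normSq (φ a)) ^ 2) *
        (‖deriv φ a‖ * (1 - Complex.normSq a)) := by
    rw [norm_mul, norm_mul, norm_div, ← Complex.normSq_eq_conj_mul_self]
    have e1 : ((Complex.normSq (φ a) : ℂ) - 1) = ((Complex.normSq (φ a) - 1 : ℝ) : ℂ) := by
      push_cast; ring
    have e2 : ((Complex.normSq a : ℂ) - 1) = ((Complex.normSq a - 1 : ℝ) : ℂ) := by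
      push_cast; ring
    have e3 : (1 : ℂ) - (Complex.normSq (φ a) : ℂ) = ((1 - Complex.normSq (φ a) : ℝ) : ℂ) := by
      push_cast; ring
    rw [e1, e2, e3, ← Complex.ofReal_pow, Complex.norm_real, Real.norm_eq_abs, Complex.norm_real, Real.norm_eq_abs,
      Complex.norm_real, Real.norm_eq_abs]
    have hna : Complex.normSq a ≤ 1 := by
      rw [← Complex.sq_norm]; nlinarith [norm_nonneg a]
    rw [abs_of_nonpos (show Complex.normSq (φ a) - 1 ≤ 0 by linarith),
      _root_.abs_of_nonneg (show (0:ℝ) ≤ (1 - Complex.normSq (φ a)) ^ 2 by positivity),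
      abs_of_nonpos (show Complex.normSq a - 1 ≤ 0 by linarith)]
    ring
  rw [hred] at hschwarz
  have hpos : (0:ℝ) < 1 - Complex.normSq (φ a) := by linarith
  have hsimp : ((1 - Complex.normSq (φ a)) / (1 - Complex.normSq (φ a)) ^ 2) =
      1 / (1 - Complex.normSq (φ a)) := by
    field_simp
  rw [hsimp, div_mul_eq_mul_div, one_mul, div_le_one hpos] at hschwarz
  have e4 : Complex.normSq a = ‖a‖ ^ 2 := (Complex.sq_norm a).symm
  have e5 : Complex.normSq (φ a) = ‖φ a‖ ^ 2 := (Complex.sq_norm (φ a)).symm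
  rw [e4, e5] at hschwarz
  linarith [hschwarz, mul_comm (‖deriv φ a‖) (1 - ‖a‖ ^ 2)]

lemma mem_unitDisk {z : ℂ} : z ∈ unitDisk ↔ ‖z‖ < 1 := by
  rw [unitDisk, mem_ball_zero_iff]

lemma zero_mem_unitDisk : (0 : ℂ) ∈ unitDisk := by simp [mem_unitDisk]

lemma one_sub_sq_pos {z : ℂ} (hz : z ∈ unitDisk) : 0 < 1 - ‖z‖ ^ 2 := by
  rw [mem_unitDisk] at hz
  nlinarith [norm_nonneg z]

lemma rpow_le_one_of_mem {z : ℂ} (hz : z ∈ unitDisk) {β : ℝ} (hβ : 0 ≤ β) :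
    (1 - ‖z‖ ^ 2) ^ β ≤ 1 := by
  have := one_sub_sq_pos hz
  refine Real.rpow_le_one (by linarith) (by nlinarith [norm_nonneg z, mem_unitDisk.1 hz]) hβ

lemma sSup_rpow_const (α c : ℝ) (hα : 0 ≤ α) (hc : 0 ≤ c) :
    sSup ((fun z : ℂ => (1 - ‖z‖ ^ 2) ^ α * c) '' unitDisk) = c := by
  apply IsGreatest.csSup_eq
  constructor
  · exact ⟨0, zero_mem_unitDisk, by simp [Real.one_rpow]⟩
  · rintro x ⟨z, hz, rfl⟩
    have h1 := rpow_le_one_of_mem hz hα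
    have h2 : (0:ℝ) ≤ (1 - ‖z‖ ^ 2) ^ α :=
      Real.rpow_nonneg (by linarith [one_sub_sq_pos hz]) α
    show (1 - ‖z‖ ^ 2) ^ α * c ≤ c
    nlinarith

lemma sSup_mul_image (c : ℝ) (hc : 0 < c) (S : Set ℝ) (hne : S.Nonempty) (hbdd : BddAbove S) :
    sSup ((fun t => c * t) '' S) = c * sSup S := by
  have := (OrderIso.mulLeft₀ c hc).map_csSup' hne hbdd
  simpa using this.symm

/-- The key Schwarz–Pick consequence for the weight. -/
lemma weight_bound {φ : ℂ → ℂ} (hdφ : DifferentiableOn ℂ φ unitDisk)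
    (hm : MapsTo φ unitDisk unitDisk) {α : ℝ} (hα : 1 < α) {z : ℂ} (hz : z ∈ unitDisk) :
    (1 - ‖z‖ ^ 2) ^ α * ‖deriv φ z‖
      ≤ (1 - ‖z‖ ^ 2) ^ (α - 1) := by
  have hpos := one_sub_sq_pos hz
  have hsp := schwarz_pick hdφ hm hz
  have hsplit : (1 - ‖z‖ ^ 2) ^ α
      = (1 - ‖z‖ ^ 2) ^ (α - 1) * (1 - ‖z‖ ^ 2) := by
    rw [show α = (α - 1) + 1 by ring, Real.rpow_add hpos, Real.rpow_one]
    ring_nf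
  have hrn : (0:ℝ) ≤ (1 - ‖z‖ ^ 2) ^ (α - 1) := Real.rpow_nonneg (by linarith) _
  have hφz : ‖φ z‖ ^ 2 ≤ 1 := by
    have := mem_unitDisk.1 (hm hz)
    nlinarith [norm_nonneg (φ z)]
  calc (1 - ‖z‖ ^ 2) ^ α * ‖deriv φ z‖
      = (1 - ‖z‖ ^ 2) ^ (α - 1) * ((1 - ‖z‖ ^ 2) * ‖deriv φ z‖) := by
        rw [hsplit]; ring
    _ ≤ (1 - ‖z‖ ^ 2) ^ (α - 1) * (1 - ‖φ z‖ ^ 2) :=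
        mul_le_mul_of_nonneg_left hsp hrn
    _ ≤ (1 - ‖z‖ ^ 2) ^ (α - 1) * 1 :=
        mul_le_mul_of_nonneg_left (by linarith [norm_nonneg (φ z), sq_nonneg (‖φ z‖)]) hrn
    _ = (1 - ‖z‖ ^ 2) ^ (α - 1) := mul_one _

lemma forward_dir (α : ℝ) (hα : 1 < α) (φ : ℂ → ℂ) (hφ : IsSelfMap φ)
    (hiso : IsIsometryOn α φ) : IsRotation φ := by
  obtain ⟨hdφ, hm⟩ := hφ
  have hα0 : (0:ℝ) ≤ α := by linarith
  set F : ℂ → ℝ := fun z => (1 - ‖z‖ ^ 2) ^ α * ‖deriv φ z‖ with hF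
  set T : Set ℝ := F '' unitDisk with hT
  have hTne : T.Nonempty := ⟨F 0, 0, zero_mem_unitDisk, rfl⟩
  have hF1 : ∀ z ∈ unitDisk, F z ≤ 1 := fun z hz =>
    (weight_bound hdφ hm hα hz).trans (rpow_le_one_of_mem hz (by linarith))
  have hTbdd : BddAbove T := ⟨1, by rintro x ⟨z, hz, rfl⟩; exact hF1 z hz⟩
  -- the three test functions
  have hbdd2 : ∀ c : ℝ, 0 ≤ c → BddAbove ((fun z : ℂ => (1 - ‖z‖ ^ 2) ^ α * c) '' unitDisk) := by
    intro c hc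
    refine ⟨c, ?_⟩
    rintro x ⟨z, hz, rfl⟩
    show (1 - ‖z‖ ^ 2) ^ α * c ≤ c
    nlinarith [rpow_le_one_of_mem hz hα0,
      Real.rpow_nonneg (le_of_lt (one_sub_sq_pos hz)) α]
  have hHB1 : IsHB α id (fun _ => 0) := by
    refine ⟨differentiable_id.differentiableOn, (differentiable_const 0).differentiableOn, ?_⟩
    have : hbSet α id (fun _ => 0) = (fun z : ℂ => (1 - ‖z‖ ^ 2) ^ α * 1) '' unitDisk := by
      unfold hbSet; congr 1; funext z; simp
    rw [this]; exact hbdd2 1 zero_le_one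
  have hHB2 : IsHB α id id := by
    refine ⟨differentiable_id.differentiableOn, differentiable_id.differentiableOn, ?_⟩
    have : hbSet α id id = (fun z : ℂ => (1 - ‖z‖ ^ 2) ^ α * 2) '' unitDisk := by
      unfold hbSet; congr 1; funext z; simp; norm_num
    rw [this]; exact hbdd2 2 (by norm_num)
  have hHB3 : IsHB α id (fun z => -z) := by
    refine ⟨differentiable_id.differentiableOn, (differentiable_id.neg).differentiableOn, ?_⟩
    have : hbSet α id (fun z => -z) = (fun z : ℂ => (1 - ‖z‖ ^ 2) ^ α * 2) '' unitDisk := by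
      unfold hbSet; congr 1; funext z; simp [deriv_neg]; norm_num
    rw [this]; exact hbdd2 2 (by norm_num)
  -- rewrite compositions
  have hid : (id : ℂ → ℂ) ∘ φ = φ := rfl
  -- equation 1
  have hset1 : hbSet α (id ∘ φ) ((fun _ => (0:ℂ)) ∘ φ) = T := by
    unfold hbSet; rw [hT, hF]
    apply Set.image_congr'
    intro z
    have h0 : ((fun _ : ℂ => (0:ℂ)) ∘ φ) = fun _ => (0:ℂ) := rfl
    simp [h0]
  have hrhs1 : hbNorm α id (fun _ => (0:ℂ)) = 1 := by
    unfold hbNorm hbSemi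
    have : hbSet α id (fun _ => 0) = (fun z : ℂ => (1 - ‖z‖ ^ 2) ^ α * 1) '' unitDisk := by
      unfold hbSet; funext; congr 1; funext z; simp
    rw [this, sSup_rpow_const α 1 hα0 zero_le_one]
    simp
  have E1 : ‖φ 0‖ + sSup T = 1 := by
    have := hiso id (fun _ => 0) hHB1
    rw [hrhs1] at this
    unfold hbNorm hbSemi at this
    rw [hset1] at this
    simpa [hid] using this
  -- equation 2
  have hmulT : sSup ((fun t => 2 * t) '' T) = 2 * sSup T :=
    sSup_mul_image 2 two_pos T hTne hTbdd
  have hset2 : hbSet α (id ∘ φ) (id ∘ φ) = (fun t => 2 * t) '' T := by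
    unfold hbSet
    rw [hT, hF, ← Set.image_comp]
    apply Set.image_congr'
    intro z; simp [Function.comp]; ring
  have hrhs2 : hbNorm α id id = 2 := by
    unfold hbNorm hbSemi
    have : hbSet α id id = (fun z : ℂ => (1 - ‖z‖ ^ 2) ^ α * 2) '' unitDisk := by
      unfold hbSet; congr 1; funext z; simp; norm_num
    rw [this, sSup_rpow_const α 2 hα0 (by norm_num)]
    simp
  have E2 : ‖φ 0 + (starRingEnd ℂ) (φ 0)‖ + 2 * sSup T = 2 := by
    have := hiso id id hHB2
    rw [hrhs2] at this
    unfold hbNorm hbSemi at this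
    rw [hset2, hmulT] at this
    simpa [hid] using this
  -- equation 3
  have hset3 : hbSet α (id ∘ φ) ((fun z => -z) ∘ φ) = (fun t => 2 * t) '' T := by
    unfold hbSet
    rw [hT, hF, ← Set.image_comp]
    apply Set.image_congr'
    intro z
    have hdn : deriv ((fun z : ℂ => -z) ∘ φ) z = -deriv φ z := by
      have : ((fun z : ℂ => -z) ∘ φ) = fun w => -(φ w) := rfl
      rw [this]; exact deriv.neg
    simp [Function.comp, hdn]; ring
  have hrhs3 : hbNorm α id (fun z => -z) = 2 := by
    unfold hbNorm hbSemi
    have : hbSet α id (fun z => -z) = (fun z : ℂ => (1 - ‖z‖ ^ 2) ^ α * 2) '' unitDisk := by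
      unfold hbSet; congr 1; funext z; simp [deriv_neg]; norm_num
    rw [this, sSup_rpow_const α 2 hα0 (by norm_num)]
    simp
  have E3 : ‖φ 0 - (starRingEnd ℂ) (φ 0)‖ + 2 * sSup T = 2 := by
    have := hiso id (fun z => -z) hHB3
    rw [hrhs3] at this
    unfold hbNorm hbSemi at this
    rw [hset3, hmulT] at this
    simp only [hid, Function.comp, id_eq] at this
    rw [show φ 0 + (starRingEnd ℂ) (-φ 0) = φ 0 - (starRingEnd ℂ) (φ 0) by
      rw [map_neg]; ring] at this
    simpa using this
  -- extract S = 1 and φ 0 = 0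
  set S := sSup T with hS
  set A := φ 0 with hA
  rw [Complex.add_conj] at E2
  rw [Complex.sub_conj] at E3
  rw [norm_mul, Complex.norm_I, mul_one, Complex.norm_real, Real.norm_eq_abs] at E3
  rw [Complex.norm_real, Real.norm_eq_abs] at E2
  have hsq : ‖A‖ ^ 2 = A.re ^ 2 + A.im ^ 2 := by
    rw [Complex.sq_norm, Complex.normSq_apply]; ring
  have hS1 : S = 1 := by
    nlinarith [abs_nonneg (2 * A.re), abs_nonneg (2 * A.im), norm_nonneg A,
      _root_.sq_abs (2 * A.re), _root_.sq_abs (2 * A.im), hsq]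
  have hA0 : φ 0 = 0 := by
    have : ‖A‖ = 0 := by linarith [E1, hS1]
    rwa [norm_eq_zero] at this
  -- step: |φ'(0)| ≥ 1
  have hge : 1 ≤ ‖deriv φ 0‖ := by
    by_contra hlt
    push_neg at hlt
    set c : ℝ := (1 + ‖deriv φ 0‖) / 2 with hc
    have hc1 : c < 1 := by rw [hc]; linarith
    have hc0 : ‖deriv φ 0‖ < c := by rw [hc]; linarith
    -- continuity of deriv φ at 0
    have han : AnalyticOnNhd ℂ φ unitDisk := by
      rw [unitDisk] at hdφ ⊢
      exact hdφ.analyticOnNhd isOpen_ball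
    have hca : ContinuousAt (fun z => ‖deriv φ z‖) 0 :=
      continuous_norm.continuousAt.comp
        ((han.deriv 0 zero_mem_unitDisk).continuousAt)
    have hev : ∀ᶠ z in 𝓝 (0:ℂ), ‖deriv φ z‖ < c :=
      hca.eventually_lt continuousAt_const hc0
    obtain ⟨δ, hδpos, hδ⟩ := Metric.eventually_nhds_iff.1 hev
    set δ' : ℝ := min δ (1/2) with hδ'
    have hδ'pos : 0 < δ' := lt_min hδpos (by norm_num)
    have hδ'le : δ' ≤ 1/2 := min_le_right _ _
    set M : ℝ := max c ((1 - δ' ^ 2) ^ (α - 1)) with hM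
    have hM1 : M < 1 := by
      rw [hM, max_lt_iff]
      refine ⟨hc1, Real.rpow_lt_one (by nlinarith) (by nlinarith) (by linarith)⟩
    have hsupM : sSup T ≤ M := by
      apply csSup_le hTne
      rintro x ⟨z, hz, rfl⟩
      by_cases hzcase : ‖z‖ < δ'
      · have hd : dist z 0 < δ := by
          rw [Complex.dist_eq, sub_zero]
          exact lt_of_lt_of_le hzcase (min_le_left _ _)
        have h1 : ‖deriv φ z‖ < c := hδ hd
        have h2 : (1 - ‖z‖ ^ 2) ^ α ≤ 1 := rpow_le_one_of_mem hz hα0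
        have h3 : (0:ℝ) ≤ (1 - ‖z‖ ^ 2) ^ α :=
          Real.rpow_nonneg (le_of_lt (one_sub_sq_pos hz)) α
        have : F z ≤ c := by
          rw [hF]
          calc (1 - ‖z‖ ^ 2) ^ α * ‖deriv φ z‖ ≤ 1 * c := by
                apply mul_le_mul h2 (le_of_lt h1) (norm_nonneg _) zero_le_one
            _ = c := one_mul c
        exact this.trans (le_max_left _ _)
      · push_neg at hzcase
        have h1 : F z ≤ (1 - ‖z‖ ^ 2) ^ (α - 1) := weight_bound hdφ hm hα hz
        have hsq : δ' ^ 2 ≤ ‖z‖ ^ 2 :=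
          pow_le_pow_left₀ (le_of_lt hδ'pos) hzcase 2
        have h2 : (1 - ‖z‖ ^ 2) ^ (α - 1) ≤ (1 - δ' ^ 2) ^ (α - 1) := by
          apply Real.rpow_le_rpow (le_of_lt (one_sub_sq_pos hz))
          · linarith
          · linarith
        exact (h1.trans h2).trans (le_max_right _ _)
    have h1M : sSup T = 1 := by rw [← hS, hS1]
    rw [h1M] at hsupM
    linarith
  have hle : ‖deriv φ 0‖ ≤ 1 := by
    have hdφ' := hdφ
    have hm' := hm
    rw [unitDisk] at hdφ' hm'
    exact Complex.norm_deriv_le_one_of_mapsTo_ball hdφ'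
      (by rw [hA0]; exact hm'.mono_right ball_subset_closedBall) one_pos
  have heq1 : ‖deriv φ 0‖ = 1 := le_antisymm hle hge
  -- Schwarz equality case
  have hmaps' : MapsTo φ (ball (0:ℂ) 1) (ball (φ 0) 1) := by
    rw [hA0]; rw [unitDisk] at hm; exact hm
  have hdφ' : DifferentiableOn ℂ φ (ball (0:ℂ) 1) := by rw [unitDisk] at hdφ; exact hdφ
  have hdsl : ‖dslope φ 0 0‖ = 1 / 1 := by
    rw [dslope_same, heq1]; norm_num
  have haff := Complex.affine_of_mapsTo_ball_of_exists_norm_dslope_eq_div hdφ' (hmaps'.mono_right ball_subset_closedBall)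
    (mem_ball_self one_pos) hdsl
  refine ⟨deriv φ 0, heq1, ?_⟩
  intro z hz
  have := haff (by rw [← unitDisk]; exact hz)
  simp only [hA0, dslope_same, sub_zero, zero_add, smul_eq_mul] at this
  rw [this, mul_comm]

lemma backward_dir (α : ℝ) (φ : ℂ → ℂ) (hrot : IsRotation φ) : IsIsometryOn α φ := by
  obtain ⟨lam, hlam, heq⟩ := hrot
  have hlam0 : lam ≠ 0 := by
    intro h; rw [h] at hlam; simp at hlam
  have hφ0 : φ 0 = 0 := by rw [heq 0 zero_mem_unitDisk, mul_zero]
  intro h g ⟨hh, hg, _⟩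
  have hmem : ∀ z : ℂ, z ∈ unitDisk → lam * z ∈ unitDisk := by
    intro z hz
    rw [mem_unitDisk] at hz ⊢
    rw [norm_mul, hlam, one_mul]; exact hz
  have hkey : ∀ (f : ℂ → ℂ), DifferentiableOn ℂ f unitDisk → ∀ z ∈ unitDisk,
      ‖deriv (f ∘ φ) z‖ = ‖deriv f (lam * z)‖ := by
    intro f hf z hz
    have hopen : unitDisk ∈ 𝓝 z := by
      rw [unitDisk] at hz ⊢; exact isOpen_ball.mem_nhds hz
    have hev : (f ∘ φ) =ᶠ[𝓝 z] (f ∘ fun w => lam * w) := by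
      filter_upwards [hopen] with w hw
      simp [Function.comp, heq w hw]
    have hfd : DifferentiableAt ℂ f (lam * z) :=
      hf.differentiableAt (by rw [unitDisk] at hmem ⊢; exact isOpen_ball.mem_nhds (hmem z hz))
    have hldz : HasDerivAt (fun w : ℂ => lam * w) lam z := by
      simpa using (hasDerivAt_id z).const_mul lam
    have hcomp : HasDerivAt (f ∘ fun w => lam * w) (deriv f (lam * z) * lam) z :=
      HasDerivAt.comp z hfd.hasDerivAt hldz
    rw [hev.deriv_eq, hcomp.deriv, norm_mul, hlam, mul_one]
  have hset : hbSet α (h ∘ φ) (g ∘ φ) = hbSet α h g := by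
    have step1 : hbSet α (h ∘ φ) (g ∘ φ) =
        (fun z => (1 - ‖z‖ ^ 2) ^ α *
          (‖deriv h (lam * z)‖ + ‖deriv g (lam * z)‖)) '' unitDisk := by
      unfold hbSet
      apply Set.image_congr
      intro z hz
      rw [hkey h hh z hz, hkey g hg z hz]
    rw [step1]
    ext t
    constructor
    · rintro ⟨z, hz, rfl⟩
      refine ⟨lam * z, hmem z hz, ?_⟩
      simp only [norm_mul, hlam, one_mul]
    · rintro ⟨w, hw, rfl⟩
      refine ⟨lam⁻¹ * w, ?_, ?_⟩
      · rw [mem_unitDisk, norm_mul, norm_inv, hlam, inv_one, one_mul]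
        exact mem_unitDisk.1 hw
      · have hww : lam * (lam⁻¹ * w) = w := by field_simp
        simp only [hww, norm_mul, norm_inv, hlam, inv_one, one_mul]
  unfold hbNorm hbSemi
  rw [hset]
  have e1 : (h ∘ φ) 0 = h 0 := by simp [Function.comp, hφ0]
  have e2 : (g ∘ φ) 0 = g 0 := by simp [Function.comp, hφ0]
  rw [e1, e2]


/-- for `α > 1` and `φ` an analytic self-map of the disk, `C_φ` is an isometry on
`HB(α)` if and only if `φ` is a rotation. -/
theorem stmt10 (α : ℝ) (hα : 1 < α) (φ : ℂ → ℂ) (hφ : IsSelfMap φ) :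
    IsIsometryOn α φ ↔ IsRotation φ :=
  ⟨forward_dir α hα φ hφ, backward_dir α φ⟩
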